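/- For every s ∈ [0,1] and every i ∈ ℕ, the set of values μ_s(B) over clopen subsets B of the cylinder A_i = {x ∈ Ω : x_i = 1} is exactly the set of values s · P(s) where P ranges over partition polynomials. -/

import Mathlib

open MeasureTheory Polynomial

/-- `P` is a partition polynomial: `P(X) = ∑_{i=0}^n a_i X^i (1-X)^(n-i)` with
integers `0 ≤ a_i ≤ C(n,i)`. -/
def IsPartitionPolynomial (P : Polynomial ℤ) : Prop :=
  ∃ (n : ℕ) (a : ℕ → ℤ),
    (∀ i ≤ n, 0 ≤ a i ∧ a i ≤ (n.choose i : ℤ)) ∧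
    P = ∑ i ∈ Finset.range (n + 1), C (a i) * X ^ i * (1 - X) ^ (n - i)

/-- `μ` is the Bernoulli(`r`) product measure on the Cantor set `ℕ → Bool`:
every cylinder specifying the coordinates in a finite set `s` to agree with `e`
has measure `r^(#1s) * (1-r)^(#0s)`.  (This characterizes the infinite power of
the `(r, 1-r)` measure on `{0,1}` uniquely among Borel measures.) -/
def IsBernoulli (r : ℝ) (μ : Measure (ℕ → Bool)) : Prop :=
  ∀ (s : Finset ℕ) (e : ℕ → Bool),
    μ {x : ℕ → Bool | ∀ i ∈ s, x i = e i} =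
      ENNReal.ofReal (r ^ (s.filter fun i => e i = true).card *
        (1 - r) ^ (s.filter fun i => e i = false).card)

/-- The cylinder `A_i = {x ∈ Ω : x i = 1}`. -/
def cylinderOne (i : ℕ) : Set (ℕ → Bool) := {x : ℕ → Bool | x i = true}

lemma cyl_measurable (F : Finset ℕ) (e : ℕ → Bool) :
    MeasurableSet {x : ℕ → Bool | ∀ j ∈ F, x j = e j} := by
  have h : {x : ℕ → Bool | ∀ j ∈ F, x j = e j} = ⋂ j ∈ F, {x : ℕ → Bool | x j = e j} := by
    ext x; simp
  rw [h]
  exact MeasurableSet.biInter F.countable_toSet fun j _ =>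
    measurable_pi_apply j (measurableSet_eq)

lemma cyl_clopen (F : Finset ℕ) (e : ℕ → Bool) :
    IsClopen {x : ℕ → Bool | ∀ j ∈ F, x j = e j} := by
  have h : {x : ℕ → Bool | ∀ j ∈ F, x j = e j} = ⋂ j ∈ F, {x : ℕ → Bool | x j = e j} := by
    ext x; simp
  rw [h]
  exact isClopen_biInter_finset fun j _ =>
    (isClopen_discrete {e j}).preimage (continuous_apply j)

lemma measure_cyl_union (s : ℝ) (μ : Measure (ℕ → Bool)) (hμ : IsBernoulli s μ)
    (F : Finset ℕ) (E : Finset (ℕ → Bool)) (hE : ∀ e ∈ E, ∀ j, j ∉ F → e j = false) :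
    μ (⋃ e ∈ E, {x : ℕ → Bool | ∀ j ∈ F, x j = e j}) =
      ∑ e ∈ E, ENNReal.ofReal (s ^ (F.filter fun j => e j = true).card *
        (1 - s) ^ (F.filter fun j => e j = false).card) := by
  rw [measure_biUnion_finset ?_ (fun e _ => cyl_measurable F e)]
  · exact Finset.sum_congr rfl fun e _ => hμ F e
  · intro e he e' he' hne
    rw [Function.onFun, Set.disjoint_left]
    intro x hx hx'
    apply hne
    funext j
    by_cases hj : j ∈ F
    · rw [← hx j hj, ← hx' j hj]
    · rw [hE e he j hj, hE e' he' j hj]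

lemma clopen_determined {B : Set (ℕ → Bool)} (hB : IsClopen B) :
    ∃ F : Finset ℕ, ∀ x y : ℕ → Bool, (∀ j ∈ F, x j = y j) → x ∈ B → y ∈ B := by
  have hopen := hB.isOpen
  rw [isOpen_pi_iff] at hopen
  choose I u hu hsub using hopen
  have hcomp : IsCompact B := hB.isClosed.isCompact
  obtain ⟨t, hcov⟩ := hcomp.elim_nhds_subcover'
    (fun x hx => {y : ℕ → Bool | ∀ j ∈ I x hx, y j = x j})
    (fun x hx => ((cyl_clopen (I x hx) x).isOpen).mem_nhds (fun j _ => rfl))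
  refine ⟨t.sup (fun z => I z.1 z.2), fun x y hagree hx => ?_⟩
  obtain ⟨z, hz, hxz⟩ := Set.mem_iUnion₂.1 (hcov hx)
  apply hsub z.1 z.2
  intro j hj
  have hjF : j ∈ t.sup (fun z => I z.1 z.2) := Finset.le_sup (f := fun z => I z.1 z.2) hz hj
  have : y j = z.1 j := by rw [← hagree j hjF]; exact hxz j hj
  rw [this]
  exact (hu z.1 z.2 j hj).2

lemma sum_grouped (s : ℝ) (hs : s ∈ Set.Icc (0:ℝ) 1) (n : ℕ) (c : ℕ → ℕ) :
    ∑ m ∈ Finset.range (n+1), (c m) • ENNReal.ofReal (s ^ (m+1) * (1 - s) ^ (n - m)) =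
      ENNReal.ofReal (s * ∑ m ∈ Finset.range (n+1),
        (c m : ℝ) * s ^ m * (1 - s) ^ (n - m)) := by
  obtain ⟨hs0, hs1⟩ := hs
  have h1s : (0:ℝ) ≤ 1 - s := by linarith
  rw [Finset.mul_sum, ENNReal.ofReal_sum_of_nonneg]
  · refine Finset.sum_congr rfl fun m _ => ?_
    rw [nsmul_eq_mul, ← ENNReal.ofReal_natCast (c m),
      ← ENNReal.ofReal_mul (by positivity)]
    congr 1
    ring
  · intro m _
    have : (0:ℝ) ≤ (c m : ℝ) := by positivity
    have := pow_nonneg hs0 m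
    have := pow_nonneg h1s (n - m)
    positivity

lemma aeval_partition (s : ℝ) (n : ℕ) (a : ℕ → ℤ) :
    aeval s (∑ m ∈ Finset.range (n + 1), C (a m) * X ^ m * (1 - X) ^ (n - m)) =
      ∑ m ∈ Finset.range (n+1), (a m : ℝ) * s ^ m * (1 - s) ^ (n - m) := by
  simp [map_sum]

lemma forward (s : ℝ) (hs : s ∈ Set.Icc (0 : ℝ) 1)
    (μ : Measure (ℕ → Bool)) (hμ : IsBernoulli s μ) (i : ℕ)
    (B : Set (ℕ → Bool)) (hB : IsClopen B) (hBi : B ⊆ cylinderOne i) :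
    ∃ P : Polynomial ℤ, IsPartitionPolynomial P ∧
      μ B = ENNReal.ofReal (s * aeval s P) := by
  classical
  obtain ⟨F₀, hdet₀⟩ := clopen_determined hB
  set F : Finset ℕ := insert i F₀ with hF
  have hiF : i ∈ F := Finset.mem_insert_self i F₀
  have hdet : ∀ x y : ℕ → Bool, (∀ j ∈ F, x j = y j) → x ∈ B → y ∈ B :=
    fun x y h hx => hdet₀ x y (fun j hj => h j (Finset.mem_insert_of_mem hj)) hx
  -- the finite set of F-supported patterns
  set ext : (↥F → Bool) → (ℕ → Bool) :=
    fun g j => if h : j ∈ F then g ⟨j, h⟩ else false with hext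
  set E : Finset (ℕ → Bool) :=
    (Finset.univ.image ext).filter (· ∈ B) with hEdef
  have hsupp : ∀ e ∈ E, ∀ j, j ∉ F → e j = false := by
    intro e he j hj
    obtain ⟨g, -, rfl⟩ := Finset.mem_image.1 (Finset.mem_filter.1 he).1
    simp [hext, hj]
  have hEB : ∀ e ∈ E, e ∈ B := fun e he => (Finset.mem_filter.1 he).2
  have hBeq : B = ⋃ e ∈ E, {x : ℕ → Bool | ∀ j ∈ F, x j = e j} := by
    ext x
    constructor
    · intro hx
      refine Set.mem_iUnion₂.2 ⟨ext (fun j => x j.1), ?_, ?_⟩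
      · refine Finset.mem_filter.2 ⟨Finset.mem_image.2 ⟨fun j => x j.1, Finset.mem_univ _, rfl⟩, ?_⟩
        exact hdet x _ (fun j hj => by simp [hext, hj]) hx
      · intro j hj
        simp [hext, hj]
    · intro hx
      obtain ⟨e, he, hxe⟩ := Set.mem_iUnion₂.1 hx
      exact hdet e x (fun j hj => (hxe j hj).symm) (hEB e he)
  have hEi : ∀ e ∈ E, e i = true := fun e he => hBi (hEB e he)
  set G : Finset ℕ := F.erase i with hG
  set n : ℕ := G.card with hn
  set k : (ℕ → Bool) → ℕ := fun e => (G.filter fun j => e j = true).card with hk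
  -- counts per number of true coordinates in G
  set a : ℕ → ℤ := fun m => ((E.filter fun e => k e = m).card : ℤ) with ha
  have hkle : ∀ e, k e ≤ n := fun e => Finset.card_le_card (Finset.filter_subset _ _)
  -- the key card identities for e ∈ E
  have htrues : ∀ e ∈ E, (F.filter fun j => e j = true).card = k e + 1 := by
    intro e he
    have : F.filter (fun j => e j = true) = insert i (G.filter fun j => e j = true) := by
      rw [hG, Finset.filter_erase]
      rw [Finset.insert_erase]
      exact Finset.mem_filter.2 ⟨hiF, hEi e he⟩
    rw [this, Finset.card_insert_of_notMem (fun hmem => by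
      exact absurd (Finset.mem_of_mem_filter i hmem) (Finset.notMem_erase i F))]
  have hfalses : ∀ e ∈ E, (F.filter fun j => e j = false).card = n - k e := by
    intro e he
    have hcard : F.card = n + 1 := by
      rw [hn, hG, Finset.card_erase_of_mem hiF]
      have : 1 ≤ F.card := Finset.card_pos.2 ⟨i, hiF⟩
      omega
    have hsplit := Finset.card_filter_add_card_filter_not
      (s := F) (p := fun j => e j = true)
    have hneg : F.filter (fun j => ¬ (e j = true)) = F.filter (fun j => e j = false) := by
      apply Finset.filter_congr
      intro j _
      simp
    rw [hneg, htrues e he] at hsplit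
    omega
  refine ⟨∑ m ∈ Finset.range (n + 1), C (a m) * X ^ m * (1 - X) ^ (n - m),
    ⟨n, a, fun m hm => ⟨Int.natCast_nonneg _, ?_⟩, rfl⟩, ?_⟩
  · -- a m ≤ choose n m
    have : (E.filter fun e => k e = m).card ≤ (G.powersetCard m).card := by
      apply Finset.card_le_card_of_injOn (fun e => G.filter fun j => e j = true)
      · intro e he
        rw [Finset.mem_coe, Finset.mem_powersetCard]
        exact ⟨Finset.filter_subset _ _, (Finset.mem_filter.1 he).2⟩
      · intro e he e' he' heq
        have heq' : G.filter (fun j => e j = true) = G.filter (fun j => e' j = true) := heq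
        have he1 : e ∈ E := Finset.mem_of_mem_filter e (by exact_mod_cast he)
        have he1' : e' ∈ E := Finset.mem_of_mem_filter e' (by exact_mod_cast he')
        funext j
        by_cases hjF : j ∈ F
        · by_cases hji : j = i
          · rw [hji, hEi e he1, hEi e' he1']
          · have hjG : j ∈ G := Finset.mem_erase.2 ⟨hji, hjF⟩
            have : (e j = true) ↔ (e' j = true) := by
              constructor <;> intro h
              · have h2 : j ∈ G.filter fun j => e j = true := Finset.mem_filter.2 ⟨hjG, h⟩
                rw [heq'] at h2
                exact (Finset.mem_filter.1 h2).2
              · have h2 : j ∈ G.filter fun j => e' j = true := Finset.mem_filter.2 ⟨hjG, h⟩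
                rw [← heq'] at h2
                exact (Finset.mem_filter.1 h2).2
            exact Bool.coe_iff_coe.mp this
        · rw [hsupp e he1 j hjF, hsupp e' he1' j hjF]
    rw [Finset.card_powersetCard, ← hn] at this
    simp only [ha]
    exact_mod_cast this
  · -- the measure computation
    rw [hBeq, measure_cyl_union s μ hμ F E hsupp]
    have step : ∀ e ∈ E,
        ENNReal.ofReal (s ^ (F.filter fun j => e j = true).card *
          (1 - s) ^ (F.filter fun j => e j = false).card) =
        ENNReal.ofReal (s ^ (k e + 1) * (1 - s) ^ (n - k e)) := by
      intro e he
      rw [htrues e he, hfalses e he]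
    rw [Finset.sum_congr rfl step]
    rw [← Finset.sum_fiberwise_of_maps_to (g := k) (t := Finset.range (n+1))
      (fun e _ => Finset.mem_range.2 (Nat.lt_succ_of_le (hkle e)))]
    have step2 : ∀ m ∈ Finset.range (n+1),
        ∑ e ∈ E.filter (fun e => k e = m), ENNReal.ofReal (s ^ (k e + 1) * (1 - s) ^ (n - k e)) =
        (E.filter (fun e => k e = m)).card • ENNReal.ofReal (s ^ (m+1) * (1 - s) ^ (n - m)) := by
      intro m _
      rw [← Finset.sum_const]
      refine Finset.sum_congr rfl fun e he => ?_
      rw [(Finset.mem_filter.1 he).2]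
    rw [Finset.sum_congr rfl step2, sum_grouped s hs n _, aeval_partition]
    simp only [ha]
    norm_cast

lemma backward (s : ℝ) (hs : s ∈ Set.Icc (0 : ℝ) 1)
    (μ : Measure (ℕ → Bool)) (hμ : IsBernoulli s μ) (i : ℕ)
    (P : Polynomial ℤ) (hP : IsPartitionPolynomial P) :
    ∃ B : Set (ℕ → Bool), IsClopen B ∧ B ⊆ cylinderOne i ∧
      μ B = ENNReal.ofReal (s * aeval s P) := by
  classical
  obtain ⟨n, a, hab, rfl⟩ := hP
  set G : Finset ℕ := (Finset.range n).image (fun j => j + i + 1) with hGdef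
  have hGcard : G.card = n := by
    rw [hGdef, Finset.card_image_of_injective _ (fun x y h => by omega), Finset.card_range]
  have hiG : i ∉ G := by
    simp only [hGdef, Finset.mem_image, Finset.mem_range]
    rintro ⟨j, -, hj⟩
    omega
  set F : Finset ℕ := insert i G with hF
  have hiF : i ∈ F := Finset.mem_insert_self i G
  -- choose families of subsets
  have hS : ∀ m : ℕ, ∃ T, T ⊆ G.powersetCard m ∧
      T.card = (if m ≤ n then (a m).toNat else 0) := by
    intro m
    by_cases hm : m ≤ n
    · refine Finset.exists_subset_card_eq ?_
      rw [Finset.card_powersetCard, hGcard, if_pos hm]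
      exact Int.toNat_le.2 (hab m hm).2
    · exact ⟨∅, Finset.empty_subset _, by rw [if_neg hm, Finset.card_empty]⟩
  choose S hS1 hS2 using hS
  have hTG : ∀ m, ∀ T ∈ S m, T ⊆ G ∧ T.card = m := by
    intro m T hT
    have := Finset.mem_powersetCard.1 (hS1 m hT)
    exact this
  set pat : Finset ℕ → (ℕ → Bool) := fun T j => decide (j ∈ insert i T) with hpat
  have hpat_i : ∀ T, pat T i = true := by intro T; simp [hpat]
  have hpat_mem : ∀ T ⊆ G, ∀ j, (pat T j = true ↔ j = i ∨ j ∈ T) := by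
    intro T _ j; simp [hpat]
  have hpatinj : ∀ T ⊆ G, ∀ T' ⊆ G, pat T = pat T' → T = T' := by
    intro T hT T' hT' h
    ext j
    constructor
    · intro hj
      have hji : j ≠ i := fun hji => hiG (hji ▸ hT hj)
      have : pat T' j = true := by rw [← h]; exact (hpat_mem T hT j).2 (Or.inr hj)
      rcases (hpat_mem T' hT' j).1 this with h1 | h1
      · exact absurd h1 hji
      · exact h1
    · intro hj
      have hji : j ≠ i := fun hji => hiG (hji ▸ hT' hj)
      have : pat T j = true := by rw [h]; exact (hpat_mem T' hT' j).2 (Or.inr hj)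
      rcases (hpat_mem T hT j).1 this with h1 | h1
      · exact absurd h1 hji
      · exact h1
  set E : Finset (ℕ → Bool) :=
    (Finset.range (n+1)).biUnion (fun m => (S m).image pat) with hE
  have hmemE : ∀ e ∈ E, ∃ m ≤ n, ∃ T ∈ S m, e = pat T := by
    intro e he
    obtain ⟨m, hm, he2⟩ := Finset.mem_biUnion.1 he
    obtain ⟨T, hT, rfl⟩ := Finset.mem_image.1 he2
    exact ⟨m, Nat.lt_succ_iff.1 (Finset.mem_range.1 hm), T, hT, rfl⟩
  have hsupp : ∀ e ∈ E, ∀ j, j ∉ F → e j = false := by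
    intro e he j hj
    obtain ⟨m, -, T, hT, rfl⟩ := hmemE e he
    have hTsub := (hTG m T hT).1
    simp only [hpat, decide_eq_false_iff_not]
    intro hmem
    rcases Finset.mem_insert.1 hmem with h1 | h1
    · exact hj (h1 ▸ hiF)
    · exact hj (Finset.mem_insert_of_mem (hTsub h1))
  refine ⟨⋃ e ∈ E, {x : ℕ → Bool | ∀ j ∈ F, x j = e j}, ?_, ?_, ?_⟩
  · exact isClopen_biUnion_finset (fun e _ => cyl_clopen F e)
  · intro x hx
    obtain ⟨e, he, hxe⟩ := Set.mem_iUnion₂.1 hx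
    obtain ⟨m, -, T, hT, rfl⟩ := hmemE e he
    show x i = true
    rw [hxe i hiF, hpat_i]
  · rw [measure_cyl_union s μ hμ F E hsupp]
    -- rewrite each summand
    have hcards : ∀ m ≤ n, ∀ T ∈ S m,
        (F.filter fun j => pat T j = true).card = m + 1 ∧
        (F.filter fun j => pat T j = false).card = n - m := by
      intro m hm T hT
      obtain ⟨hTsub, hTcard⟩ := hTG m T hT
      have hfe : F.filter (fun j => pat T j = true) = insert i T := by
        ext j
        simp only [Finset.mem_filter, hpat_mem T hTsub j, Finset.mem_insert]
        constructor
        · rintro ⟨-, h⟩; exact h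
        · rintro (h | h)
          · exact ⟨h ▸ hiF, Or.inl h⟩
          · exact ⟨Finset.mem_insert_of_mem (hTsub h), Or.inr h⟩
      have htrue : (F.filter fun j => pat T j = true).card = m + 1 := by
        rw [hfe, Finset.card_insert_of_notMem (fun h => hiG (hTsub h)), hTcard]
      refine ⟨htrue, ?_⟩
      have hFcard : F.card = n + 1 := by
        rw [hF, Finset.card_insert_of_notMem hiG, hGcard]
      have hsplit := Finset.card_filter_add_card_filter_not
        (s := F) (p := fun j => pat T j = true)
      have hneg : F.filter (fun j => ¬ (pat T j = true)) =
          F.filter (fun j => pat T j = false) := by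
        apply Finset.filter_congr; intro j _; simp
      rw [hneg, htrue] at hsplit
      omega
    have hdisj : ∀ m₁ ∈ Finset.range (n+1), ∀ m₂ ∈ Finset.range (n+1), m₁ ≠ m₂ →
        Disjoint ((S m₁).image pat) ((S m₂).image pat) := by
      intro m₁ _ m₂ _ hne
      rw [Finset.disjoint_left]
      intro e he1 he2
      obtain ⟨T₁, hT₁, rfl⟩ := Finset.mem_image.1 he1
      obtain ⟨T₂, hT₂, heq⟩ := Finset.mem_image.1 he2
      have := hpatinj T₂ (hTG m₂ T₂ hT₂).1 T₁ (hTG m₁ T₁ hT₁).1 heq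
      apply hne
      rw [← (hTG m₁ T₁ hT₁).2, ← (hTG m₂ T₂ hT₂).2, this]
    rw [hE, Finset.sum_biUnion]
    swap
    · intro m₁ h₁ m₂ h₂ hne
      exact hdisj m₁ (by exact_mod_cast h₁) m₂ (by exact_mod_cast h₂) hne
    have hinner : ∀ m ∈ Finset.range (n+1),
        (∑ e ∈ (S m).image pat, ENNReal.ofReal (s ^ (F.filter fun j => e j = true).card *
          (1 - s) ^ (F.filter fun j => e j = false).card)) =
        (if m ≤ n then (a m).toNat else 0) • ENNReal.ofReal (s ^ (m+1) * (1 - s) ^ (n - m)) := by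
      intro m hm
      have hmn := Nat.lt_succ_iff.1 (Finset.mem_range.1 hm)
      rw [Finset.sum_image (fun T hT T' hT' h =>
        hpatinj T (hTG m T hT).1 T' (hTG m T' hT').1 h)]
      rw [← hS2 m, ← Finset.sum_const]
      refine Finset.sum_congr rfl fun T hT => ?_
      obtain ⟨h1, h2⟩ := hcards m hmn T hT
      rw [h1, h2]
    rw [Finset.sum_congr rfl hinner]
    have : ∀ m ∈ Finset.range (n+1), (if m ≤ n then (a m).toNat else 0) •
        ENNReal.ofReal (s ^ (m+1) * (1 - s) ^ (n - m)) =
        (fun m => (a m).toNat) m • ENNReal.ofReal (s ^ (m+1) * (1 - s) ^ (n - m)) := by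
      intro m hm
      rw [if_pos (Nat.lt_succ_iff.1 (Finset.mem_range.1 hm))]
    rw [Finset.sum_congr rfl this, sum_grouped s hs n _, aeval_partition]
    congr 1
    refine congrArg (s * ·) (Finset.sum_congr rfl fun m hm => ?_)
    have := (hab m (Nat.lt_succ_iff.1 (Finset.mem_range.1 hm))).1
    congr 1
    congr 1
    exact_mod_cast Int.toNat_of_nonneg this


/-- the values `μ_s(B)` over clopen subsets `B` of the cylinder
`A_i` are exactly the values `s * P(s)` for `P` a partition polynomial. -/
theorem measures_of_clopen_subsets_of_cylinder
    (s : ℝ) (hs : s ∈ Set.Icc (0 : ℝ) 1)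
    (μ : Measure (ℕ → Bool)) (hμ : IsBernoulli s μ) (i : ℕ) :
    {t : ENNReal | ∃ B : Set (ℕ → Bool), IsClopen B ∧ B ⊆ cylinderOne i ∧ μ B = t} =
      {t : ENNReal | ∃ P : Polynomial ℤ, IsPartitionPolynomial P ∧
        t = ENNReal.ofReal (s * aeval s P)} := by
  ext t
  simp only [Set.mem_setOf_eq]
  constructor
  · rintro ⟨B, hB, hBi, rfl⟩
    exact forward s hs μ hμ i B hB hBi
  · rintro ⟨P, hP, rfl⟩
    exact backward s hs μ hμ i P hP
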